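/- Let ω : I → ℝ satisfy ω(i) > 0 for all i ∈ I. Let n, m ∈ I, let S, T ⊆ I be finite sets with n ∉ S and m ∉ T, and set v = e_n − ∑_{s∈S} e_s and w = e_m − ∑_{t∈T} e_t. Assume ω(n) − ∑_{s∈S} ω(s) > 0, ω(m) − ∑_{t∈T} ω(t) > 0, and Q(v,w) = 1. Then exactly one of the following holds: (i) n ∈ T, m ∉ S and S ∩ T = ∅, or (ii) m ∈ S, n ∉ T and S ∩ T = ∅. In particular, exactly one basis vector e_i occurs in both v and w, with coefficient +1 in one of them and −1 in the other. -/
import Mathlib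


/-- The free ℤ-module with basis {h} ∪ {e_i : i ∈ I}:
the second homology lattice of a blow-up of ℂP². -/
abbrev BlowupLattice (I : Type*) : Type _ := ℤ × (I →₀ ℤ)

/-- The class h of the line. -/
def Hclass {I : Type*} : BlowupLattice I := (1, 0)

/-- The exceptional class e_i. -/
noncomputable def Eclass {I : Type*} (i : I) : BlowupLattice I := (0, Finsupp.single i 1)

/-- The intersection form: Q(h,h) = 1, Q(e_i,e_i) = -1, and all other pairings of
distinct basis vectors vanish. -/
def Qform {I : Type*} (v w : BlowupLattice I) : ℤ :=
  v.1 * w.1 - v.2.sum fun i c => c * w.2 i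

lemma snd_apply {I : Type*} [DecidableEq I] (a : I) (X : Finset I) (i : I) :
    (Eclass a - ∑ x ∈ X, Eclass x).2 i
      = (if i = a then 1 else 0) - (if i ∈ X then 1 else 0) := by
  simp [Eclass, Prod.snd_sum, Finsupp.single_apply, Finset.sum_apply', Finset.sum_ite_eq', eq_comm]

theorem stmt_1 {I : Type*} [DecidableEq I] (ω : I → ℝ) (hω : ∀ i, 0 < ω i)
    (n m : I) (S T : Finset I) (hnS : n ∉ S) (hmT : m ∉ T)
    (v w : BlowupLattice I)
    (hv : v = Eclass n - ∑ s ∈ S, Eclass s)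
    (hw : w = Eclass m - ∑ t ∈ T, Eclass t)
    (hωv : 0 < ω n - ∑ s ∈ S, ω s)
    (hωw : 0 < ω m - ∑ t ∈ T, ω t)
    (hQ : Qform v w = 1) :
    Xor' (n ∈ T ∧ m ∉ S ∧ S ∩ T = ∅) (m ∈ S ∧ n ∉ T ∧ S ∩ T = ∅) := by
  subst hv hw
  -- compute Qform
  have hsupp : (Eclass n - ∑ s ∈ S, Eclass (I := I) s).2.support ⊆ insert n S := by
    intro i hi
    simp only [Finsupp.mem_support_iff, snd_apply] at hi
    by_contra h
    simp only [Finset.mem_insert, not_or] at h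
    simp [h.1, h.2] at hi
  have hQ' : Qform (Eclass n - ∑ s ∈ S, Eclass (I := I) s)
      (Eclass m - ∑ t ∈ T, Eclass (I := I) t)
      = -(((if n = m then 1 else 0) - (if n ∈ T then 1 else 0))
          - ((if m ∈ S then 1 else 0) - ((S ∩ T).card : ℤ))) := by
    unfold Qform
    rw [Finsupp.sum_of_support_subset _ hsupp _ (by intro i _; ring)]
    have h1 : (Eclass n - ∑ s ∈ S, Eclass (I := I) s).1 = 0 := by
      simp [Eclass, Prod.fst_sum]
    rw [h1, Finset.sum_insert hnS]
    have h2 : ∀ s ∈ S, (Eclass n - ∑ s ∈ S, Eclass (I := I) s).2 s *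
        (Eclass m - ∑ t ∈ T, Eclass (I := I) t).2 s
        = -((if s = m then 1 else 0) - (if s ∈ T then 1 else 0)) := by
      intro s hs
      rw [snd_apply, snd_apply]
      have : s ≠ n := fun h => hnS (h ▸ hs)
      simp [this, hs]
    rw [Finset.sum_congr rfl h2, snd_apply, snd_apply]
    simp only [if_pos rfl, if_neg hnS]
    rw [Finset.sum_neg_distrib, Finset.sum_sub_distrib,
      Finset.sum_ite_eq' S m (fun _ => (1:ℤ))]
    have h3 : ∑ s ∈ S, (if s ∈ T then (1:ℤ) else 0) = ((S ∩ T).card : ℤ) := by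
      rw [Finset.sum_ite_mem]
      simp
    rw [h3]
    simp
    ring
  rw [hQ'] at hQ
  -- not both
  have hnb : ¬(n ∈ T ∧ m ∈ S) := by
    rintro ⟨hnT, hmS⟩
    have h1 : ω m ≤ ∑ s ∈ S, ω s :=
      Finset.single_le_sum (fun i _ => (hω i).le) hmS
    have h2 : ω n ≤ ∑ t ∈ T, ω t :=
      Finset.single_le_sum (fun i _ => (hω i).le) hnT
    linarith
  have hnm : n = m → ¬ (n ∈ T) := fun h => h ▸ hmT
  have hc : (0:ℤ) ≤ ((S ∩ T).card : ℤ) := Int.natCast_nonneg _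
  have hcard : (S ∩ T).card = 0 ∧ ((n ∈ T ∧ m ∉ S) ∨ (m ∈ S ∧ n ∉ T)) := by
    by_cases h1 : n ∈ T <;> by_cases h2 : m ∈ S <;>
      by_cases h3 : n = m <;>
      simp [h1, h2, h3] at hQ ⊢
    all_goals try exact absurd (And.intro h1 h2) hnb
    all_goals try exact absurd h1 (hnm h3)
    all_goals try exact absurd h2 (h3 ▸ hnS)
    all_goals first | omega | assumption
  have hST : S ∩ T = ∅ := Finset.card_eq_zero.mp hcard.1
  rcases hcard.2 with ⟨h1, h2⟩ | ⟨h1, h2⟩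
  · exact Or.inl ⟨⟨h1, h2, hST⟩, fun h => h2 h.1⟩
  · exact Or.inr ⟨⟨h1, h2, hST⟩, fun h => h2 h.1⟩
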